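/- In a two-bidder first-price sealed-bid auction with i.i.d. U[0,1] valuations and constant relative risk aversion utility u = ((v−b)⁺)^ρ with ρ ∈ (0,1], the strategy β(v) = v/(1+ρ) is a symmetric Bayes-Nash equilibrium: for each v ∈ [0,1], the bid b = v/(1+ρ) maximizes (v−b)^ρ · P(opponent's bid < b) = (v−b)^ρ · min((1+ρ)b, 1) over b ∈ [0, v]. -/

import Mathlib

/-- In the two-bidder FPSB auction with i.i.d. U[0,1] valuations and CRRA utility
`((v−b)⁺)^ρ`, `ρ ∈ (0,1]`, the strategy `β(v) = v/(1+ρ)` is a symmetric BNE: for each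
valuation `v`, the bid `v/(1+ρ)` maximizes `(v−b)^ρ · min((1+ρ)b, 1)` over `b ∈ [0,v]`. -/
theorem fpsb_crra_equilibrium
    (ρ : ℝ) (hρ : ρ ∈ Set.Ioc (0 : ℝ) 1) :
    ∀ v ∈ Set.Icc (0 : ℝ) 1, ∀ b ∈ Set.Icc (0 : ℝ) v,
      (v - b) ^ ρ * min ((1 + ρ) * b) 1 ≤
        (v - v / (1 + ρ)) ^ ρ * min ((1 + ρ) * (v / (1 + ρ))) 1 := by
  obtain ⟨hρ0, hρ1⟩ := hρ
  intro v hv b hb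
  obtain ⟨hv0, hv1⟩ := hv
  obtain ⟨hb0, hbv⟩ := hb
  have hs0 : (0:ℝ) < 1 + ρ := by linarith
  have hsne : (1:ℝ) + ρ ≠ 0 := ne_of_gt hs0
  rcases eq_or_lt_of_le hv0 with hv0' | hvpos
  · -- v = 0, hence b = 0
    have hb0' : b = 0 := le_antisymm (hv0' ▸ hbv) hb0
    subst hb0'
    rw [← hv0']
    simp
  -- v > 0
  have hvb : 0 ≤ v - b := by linarith
  have hmul : (1 + ρ) * (v / (1 + ρ)) = v := by field_simp
  have hmin2 : min ((1 + ρ) * (v / (1 + ρ))) 1 = v := by rw [hmul]; exact min_eq_left hv1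
  have hvv : v - v / (1 + ρ) = ρ * v / (1 + ρ) := by field_simp; ring_nf
  rw [hmin2, hvv]
  have hbase : 0 < ρ * v / (1 + ρ) := by positivity
  -- AM-GM
  have amgm := Real.geom_mean_le_arith_mean2_weighted
    (by positivity : (0:ℝ) ≤ ρ / (1 + ρ)) (by positivity : (0:ℝ) ≤ 1 / (1 + ρ))
    hvb (by positivity : (0:ℝ) ≤ ρ * b)
    (by rw [← add_div, add_comm, div_self hsne] : ρ / (1 + ρ) + 1 / (1 + ρ) = 1)
  have hsum : ρ / (1 + ρ) * (v - b) + 1 / (1 + ρ) * (ρ * b) = ρ * v / (1 + ρ) := by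
    field_simp; ring
  rw [hsum] at amgm
  have hApos : 0 ≤ (v - b) ^ (ρ / (1 + ρ)) * (ρ * b) ^ (1 / (1 + ρ)) := by positivity
  have key0 := Real.rpow_le_rpow hApos amgm (le_of_lt hs0)
  have hexp1 : ρ / (1 + ρ) * (1 + ρ) = ρ := by field_simp
  have hexp2 : 1 / (1 + ρ) * (1 + ρ) = 1 := by field_simp
  have hL : ((v - b) ^ (ρ / (1 + ρ)) * (ρ * b) ^ (1 / (1 + ρ))) ^ (1 + ρ)
      = (v - b) ^ ρ * (ρ * b) := by
    rw [Real.mul_rpow (by positivity) (by positivity),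
      ← Real.rpow_mul hvb, ← Real.rpow_mul (by positivity : (0:ℝ) ≤ ρ * b),
      hexp1, hexp2, Real.rpow_one]
  have hR : (ρ * v / (1 + ρ)) ^ (1 + ρ)
      = (ρ * v / (1 + ρ)) ^ ρ * (ρ * v / (1 + ρ)) := by
    rw [show (1:ℝ) + ρ = ρ + 1 from by ring, Real.rpow_add (by positivity), Real.rpow_one]
  rw [hL, hR] at key0
  -- key0 : (v-b)^ρ * (ρ*b) ≤ (ρ*v/(1+ρ))^ρ * (ρ*v/(1+ρ))
  have hmin1 : min ((1 + ρ) * b) 1 ≤ (1 + ρ) * b := min_le_left _ _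
  have hK : 0 ≤ (v - b) ^ ρ := Real.rpow_nonneg hvb ρ
  calc (v - b) ^ ρ * min ((1 + ρ) * b) 1
      ≤ (v - b) ^ ρ * ((1 + ρ) * b) := by
        exact mul_le_mul_of_nonneg_left hmin1 hK
    _ = ((1 + ρ) / ρ) * ((v - b) ^ ρ * (ρ * b)) := by field_simp
    _ ≤ ((1 + ρ) / ρ) * ((ρ * v / (1 + ρ)) ^ ρ * (ρ * v / (1 + ρ))) := by
        exact mul_le_mul_of_nonneg_left key0 (by positivity)
    _ = (ρ * v / (1 + ρ)) ^ ρ * v := by field_simp
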